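/- Let n ≥ 1 and let P_n = {(c, b) : c ≥ 1, c | n, 0 ≤ b < n/c, (c, b) n-admissible}. The map (c, b) ↦ [c : d(c, b)] is a bijection from P_n onto I_n. -/

import Mathlib

/-- The equivalence relation `∼_n` on `ℤ × ℤ`: `(x, y) ∼_n (x', y')` iff there
is `k ∈ ℤ` with `gcd(k, n) = 1`, `k x ≡ x' (mod n)` and `k y ≡ y' (mod n)`. -/
def relN (n : ℕ) (u v : ℤ × ℤ) : Prop :=
  ∃ k : ℤ, Int.gcd k (n : ℤ) = 1 ∧
    (n : ℤ) ∣ (k * u.1 - v.1) ∧ (n : ℤ) ∣ (k * u.2 - v.2)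

/-- A pair `(c, b)` with `c ≥ 1`, `c ∣ n`, `0 ≤ b < n/c` is `n`-admissible if
there is `k ∈ {0, …, c−1}` with `gcd(c, b + k·(n/c)) = 1`. -/
def nAdm (n c b : ℕ) : Prop :=
  1 ≤ c ∧ c ∣ n ∧ b < n / c ∧ ∃ k < c, Nat.gcd c (b + k * (n / c)) = 1

/-- `d(c, b) = min {c + b + k·(n/c) : k ∈ {0, …, c−1}, gcd(c, b + k·(n/c)) = 1}`. -/
noncomputable def dcb (n c b : ℕ) : ℕ :=
  sInf {e : ℕ | ∃ k < c, Nat.gcd c (b + k * (n / c)) = 1 ∧ e = c + b + k * (n / c)}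


private lemma gcd_congr {a b c : ℤ} (h : c ∣ a - b) : Int.gcd a c = Int.gcd b c := by
  have key : ∀ x y : ℤ, c ∣ x - y → (Int.gcd x c : ℤ) ∣ (Int.gcd y c : ℤ) := by
    intro x y hxy
    apply Int.dvd_coe_gcd
    · have h1 : (Int.gcd x c : ℤ) ∣ x := Int.gcd_dvd_left _ _
      have h2 : (Int.gcd x c : ℤ) ∣ x - y := (Int.gcd_dvd_right _ _).trans hxy
      have := h1.sub h2
      simpa using this
    · exact Int.gcd_dvd_right _ _
  have h' : c ∣ b - a := by
    rw [show b - a = -(a - b) by ring]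
    exact dvd_neg.mpr h
  exact Nat.dvd_antisymm (Int.natCast_dvd_natCast.mp (key a b h))
    (Int.natCast_dvd_natCast.mp (key b a h'))

private lemma gcd_mul_cancel {k n : ℤ} (c : ℤ) (h : Int.gcd k n = 1) :
    Int.gcd (k * c) n = Int.gcd c n := by
  rw [Int.gcd_def, Int.natAbs_mul, Nat.Coprime.gcd_mul_left_cancel _ h, ← Int.gcd_def]

private lemma lift_coprime {m n : ℕ} (hm : m ∣ n) (hn : n ≠ 0) (a : ℤ)
    (ha : Int.gcd a (m : ℤ) = 1) : ∃ k : ℤ, Int.gcd k (n : ℤ) = 1 ∧ (m : ℤ) ∣ k - a := by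
  haveI : NeZero n := ⟨hn⟩
  have hm0 : m ≠ 0 := fun h => hn (Nat.eq_zero_of_zero_dvd (h ▸ hm))
  have hmz : (m : ℤ) ≠ 0 := Int.natCast_ne_zero.mpr hm0
  set a' : ℕ := (a % (m : ℤ)).toNat with ha'def
  have ha'' : (a' : ℤ) = a % (m : ℤ) := Int.toNat_of_nonneg (Int.emod_nonneg a hmz)
  have hdvd : (m : ℤ) ∣ (a' : ℤ) - a := ⟨-(a / m), by rw [ha'', Int.emod_def]; ring⟩
  have hcop : Nat.Coprime a' m := by
    have h1 : Int.gcd (a' : ℤ) (m : ℤ) = Int.gcd a (m : ℤ) := gcd_congr hdvd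
    rw [ha, Int.gcd_natCast_natCast] at h1
    exact h1
  obtain ⟨v, hv⟩ := ZMod.unitsMap_surjective hm (ZMod.unitOfCoprime a' hcop)
  refine ⟨((v : ZMod n).val : ℤ), ?_, ?_⟩
  · rw [Int.gcd_natCast_natCast]
    exact ZMod.val_coe_unit_coprime v
  · have hcast : (((v : ZMod n).val : ℕ) : ZMod m) = (a' : ZMod m) := by
      have h1 : ZMod.castHom hm (ZMod m) (v : ZMod n)
          = ((ZMod.unitOfCoprime a' hcop : (ZMod m)ˣ) : ZMod m) := by
        rw [← hv]; rfl
      rw [ZMod.castHom_apply, ← ZMod.natCast_val, ZMod.coe_unitOfCoprime] at h1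
      exact h1
    have hmodeq := (ZMod.natCast_eq_natCast_iff _ _ _).mp hcast
    have h2 : (m : ℤ) ∣ ((a' : ℤ)) - ((v : ZMod n).val : ℤ) := hmodeq.dvd
    have h3 : (m : ℤ) ∣ (((v : ZMod n).val : ℤ) - (a' : ℤ)) := by
      rw [show ((v : ZMod n).val : ℤ) - a' = -((a' : ℤ) - ((v : ZMod n).val : ℤ)) by ring]
      exact dvd_neg.mpr h2
    have := h3.add hdvd
    simpa using this

private lemma dcb_spec {n c b : ℕ} (h : nAdm n c b) :
    ∃ k < c, Nat.gcd c (b + k * (n / c)) = 1 ∧ dcb n c b = c + b + k * (n / c) := by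
  obtain ⟨hc, hdvd, hb, k, hk, hg⟩ := h
  have hne : {e : ℕ | ∃ k < c, Nat.gcd c (b + k * (n / c)) = 1 ∧
      e = c + b + k * (n / c)}.Nonempty := ⟨c + b + k * (n / c), k, hk, hg, rfl⟩
  exact Nat.sInf_mem hne

/-- Proposition 5.9: the map `(c, b) ↦ [c : d(c, b)]` is a bijection from the
set `P_n` of `n`-admissible pairs onto `I_n` (the `∼_n`-classes `[x : y]` with
`gcd(x, y, n) = 1`). -/
theorem admissible_pairs_biject_In (n : ℕ) (hn : 1 ≤ n) :
    (∀ c b : ℕ, nAdm n c b →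
      Int.gcd (Int.gcd (c : ℤ) (dcb n c b : ℤ)) (n : ℤ) = 1) ∧
    (∀ c b c' b' : ℕ, nAdm n c b → nAdm n c' b' →
      relN n ((c : ℤ), (dcb n c b : ℤ)) ((c' : ℤ), (dcb n c' b' : ℤ)) →
      c = c' ∧ b = b') ∧
    (∀ x y : ℤ, Int.gcd (Int.gcd x y) (n : ℤ) = 1 →
      ∃ c b : ℕ, nAdm n c b ∧ relN n (x, y) ((c : ℤ), (dcb n c b : ℤ))) := by
  have hn0 : n ≠ 0 := by omega
  refine ⟨?_, ?_, ?_⟩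
  · -- Part 1: image lands in I_n
    intro c b h
    obtain ⟨k, hk, hg, hd⟩ := dcb_spec h
    rw [hd, Int.gcd_natCast_natCast, Int.gcd_natCast_natCast]
    have h1 : Nat.gcd c (c + b + k * (n / c)) = 1 := by
      rw [Nat.add_assoc, Nat.add_comm c, Nat.gcd_add_self_right]
      exact hg
    rw [h1]
    simp
  · -- Part 2: injectivity
    intro c b c' b' h h' hrel
    obtain ⟨k0, hk0, hg0, hd0⟩ := dcb_spec h
    obtain ⟨k1, hk1, hg1, hd1⟩ := dcb_spec h'
    obtain ⟨hc1, hcdvd, hblt, -⟩ := h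
    obtain ⟨hc1', hcdvd', hblt', -⟩ := h'
    obtain ⟨k, hk, h1, h2⟩ := hrel
    simp only at h1 h2
    have hcc : c = c' := by
      have e1 : Int.gcd (k * (c : ℤ)) (n : ℤ) = Int.gcd (c' : ℤ) (n : ℤ) := gcd_congr h1
      rw [gcd_mul_cancel _ hk, Int.gcd_natCast_natCast, Int.gcd_natCast_natCast,
        Nat.gcd_eq_left hcdvd, Nat.gcd_eq_left hcdvd'] at e1
      exact e1
    subst hcc
    refine ⟨rfl, ?_⟩
    have hnm : n = c * (n / c) := (Nat.mul_div_cancel' hcdvd).symm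
    have hczi : (c : ℤ) ≠ 0 := Int.natCast_ne_zero.mpr (by omega)
    have hnmZ : (n : ℤ) = (c : ℤ) * ((n / c : ℕ) : ℤ) := by exact_mod_cast hnm
    have hkm : ((n / c : ℕ) : ℤ) ∣ k - 1 := by
      have h1' : (c : ℤ) * ((n / c : ℕ) : ℤ) ∣ (c : ℤ) * (k - 1) := by
        rw [show (c : ℤ) * (k - 1) = k * (c : ℤ) - (c : ℤ) by ring, ← hnmZ]
        exact h1
      exact (mul_dvd_mul_iff_left hczi).mp h1'
    have hmn : ((n / c : ℕ) : ℤ) ∣ (n : ℤ) :=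
      Int.natCast_dvd_natCast.mpr (Nat.div_dvd_of_dvd hcdvd)
    have hdd : ((n / c : ℕ) : ℤ) ∣ ((dcb n c b : ℤ) - (dcb n c b' : ℤ)) := by
      have t1 : ((n / c : ℕ) : ℤ) ∣ k * (dcb n c b : ℤ) - (dcb n c b' : ℤ) :=
        dvd_trans hmn h2
      have t2 : ((n / c : ℕ) : ℤ) ∣ (k - 1) * (dcb n c b : ℤ) := hkm.mul_right _
      have t3 := t1.sub t2
      rw [show k * (dcb n c b : ℤ) - (dcb n c b' : ℤ) - (k - 1) * (dcb n c b : ℤ)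
        = (dcb n c b : ℤ) - (dcb n c b' : ℤ) by ring] at t3
      exact t3
    have hbb : ((n / c : ℕ) : ℤ) ∣ (b : ℤ) - (b' : ℤ) := by
      have e2 : ((dcb n c b : ℤ) - (dcb n c b' : ℤ))
          = ((b : ℤ) - (b' : ℤ)) + ((k0 : ℤ) - (k1 : ℤ)) * ((n / c : ℕ) : ℤ) := by
        rw [hd0, hd1]; push_cast; ring
      rw [e2] at hdd
      have t2 : ((n / c : ℕ) : ℤ) ∣ ((k0 : ℤ) - (k1 : ℤ)) * ((n / c : ℕ) : ℤ) :=
        dvd_mul_left _ _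
      have t3 := hdd.sub t2
      simpa using t3
    have hbz : (b : ℤ) - (b' : ℤ) = 0 := by
      apply Int.eq_zero_of_abs_lt_dvd hbb
      have l1 : (b : ℤ) < ((n / c : ℕ) : ℤ) := by exact_mod_cast hblt
      have l2 : (b' : ℤ) < ((n / c : ℕ) : ℤ) := by exact_mod_cast hblt'
      have l3 : (0 : ℤ) ≤ (b : ℤ) := Int.natCast_nonneg _
      have l4 : (0 : ℤ) ≤ (b' : ℤ) := Int.natCast_nonneg _
      rw [abs_lt]
      constructor <;> omega
    have := sub_eq_zero.mp hbz
    exact_mod_cast this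
  · -- Part 3: surjectivity
    intro x y hxy
    set c : ℕ := Int.gcd x (n : ℤ) with hcdef
    have hcn : (c : ℤ) ∣ (n : ℤ) := by rw [hcdef]; exact Int.gcd_dvd_right _ _
    have hcdvd : c ∣ n := Int.natCast_dvd_natCast.mp hcn
    have hc0 : c ≠ 0 := fun h0 => hn0 (Nat.eq_zero_of_zero_dvd (h0 ▸ hcdvd))
    have hnm : n = c * (n / c) := (Nat.mul_div_cancel' hcdvd).symm
    set m : ℕ := n / c with hmdef
    have hm0 : m ≠ 0 := fun h0 => hn0 (by rw [hnm, h0, Nat.mul_zero])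
    have hmz : (m : ℤ) ≠ 0 := Int.natCast_ne_zero.mpr hm0
    have hmpos : (0 : ℤ) < (m : ℤ) := Int.natCast_pos.mpr (Nat.pos_of_ne_zero hm0)
    have hnmZ : (n : ℤ) = (c : ℤ) * (m : ℤ) := by exact_mod_cast hnm
    have hcx : (c : ℤ) ∣ x := by rw [hcdef]; exact Int.gcd_dvd_left _ _
    obtain ⟨x₀, hx0⟩ := hcx
    have hx0m : Int.gcd x₀ (m : ℤ) = 1 := by
      have e1 := Int.gcd_mul_left (c : ℤ) x₀ (m : ℤ)
      rw [← hx0, ← hnmZ, ← hcdef, Int.natAbs_natCast] at e1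
      refine Nat.eq_of_mul_eq_mul_left (Nat.pos_of_ne_zero hc0) ?_
      rw [Nat.mul_one]
      exact e1.symm
    obtain ⟨u, v, huv⟩ := Int.isCoprime_iff_gcd_eq_one.mpr hx0m
    have hum : Int.gcd u (m : ℤ) = 1 :=
      Int.isCoprime_iff_gcd_eq_one.mp ⟨x₀, v, by linear_combination huv⟩
    have hmdvdn : m ∣ n := Nat.div_dvd_of_dvd hcdvd
    obtain ⟨k, hkn, hku⟩ := lift_coprime hmdvdn hn0 u hum
    have hm1 : (m : ℤ) ∣ k * x₀ - 1 := by
      have d1 : (m : ℤ) ∣ (k - u) * x₀ := hku.mul_right _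
      have d2 : (m : ℤ) ∣ u * x₀ - 1 := ⟨-v, by linear_combination huv⟩
      have d3 := d1.add d2
      rw [show (k - u) * x₀ + (u * x₀ - 1) = k * x₀ - 1 by ring] at d3
      exact d3
    obtain ⟨w₀, hw₀⟩ := hm1
    have hkx : (n : ℤ) ∣ k * x - (c : ℤ) := by
      refine ⟨w₀, ?_⟩
      rw [hx0, hnmZ]
      linear_combination (c : ℤ) * hw₀
    have hgcy : IsCoprime (c : ℤ) y := by
      rw [Int.isCoprime_iff_gcd_eq_one]
      have d1 : (Int.gcd (c : ℤ) y : ℤ) ∣ (Int.gcd x y : ℤ) :=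
        Int.dvd_coe_gcd ((Int.gcd_dvd_left _ _).trans ⟨x₀, hx0⟩) (Int.gcd_dvd_right _ _)
      have d2 : (Int.gcd (c : ℤ) y : ℤ) ∣
          ((Int.gcd ((Int.gcd x y : ℕ) : ℤ) (n : ℤ) : ℕ) : ℤ) :=
        Int.dvd_coe_gcd d1 ((Int.gcd_dvd_left _ _).trans hcn)
      rw [hxy] at d2
      exact Nat.dvd_one.mp (Int.natCast_dvd_natCast.mp d2)
    have hck : IsCoprime (c : ℤ) k := by
      have hkn' : IsCoprime k (n : ℤ) := Int.isCoprime_iff_gcd_eq_one.mpr hkn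
      exact (hkn'.of_isCoprime_of_dvd_right hcn).symm
    have hce : IsCoprime (c : ℤ) (k * y) := hck.mul_right hgcy
    set e : ℤ := k * y with hedef
    set b : ℕ := ((e - c) % m).toNat with hbdef
    have hbz : (b : ℤ) = (e - c) % m := Int.toNat_of_nonneg (Int.emod_nonneg _ hmz)
    have hblt : b < m := by
      have h2 : (b : ℤ) < (m : ℤ) := by rw [hbz]; exact Int.emod_lt_of_pos _ hmpos
      exact_mod_cast h2
    obtain ⟨t, ht⟩ : (m : ℤ) ∣ (e - c) - b :=
      ⟨(e - c) / m, by rw [hbz, Int.emod_def]; ring⟩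
    have he : e = (c : ℤ) + b + m * t := by linarith [ht]
    set j : ℕ := (t % c).toNat with hjdef
    have hczi : (c : ℤ) ≠ 0 := Int.natCast_ne_zero.mpr hc0
    have hcpos : (0 : ℤ) < (c : ℤ) := Int.natCast_pos.mpr (Nat.pos_of_ne_zero hc0)
    have hjz : (j : ℤ) = t % c := Int.toNat_of_nonneg (Int.emod_nonneg _ hczi)
    have hjlt : j < c := by
      have h2 : (j : ℤ) < (c : ℤ) := by rw [hjz]; exact Int.emod_lt_of_pos _ hcpos
      exact_mod_cast h2
    obtain ⟨s₀, hs₀⟩ : (c : ℤ) ∣ t - j := ⟨t / c, by rw [hjz, Int.emod_def]; ring⟩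
    have hsplit : ((b : ℤ) + j * m) = e + (c : ℤ) * (-1 - m * s₀) := by
      rw [he]; linear_combination (-(m : ℤ)) * hs₀
    have hcbj : IsCoprime (c : ℤ) ((b : ℤ) + j * m) := by
      have h5 := hce.add_mul_right_right (-1 - (m : ℤ) * s₀)
      rw [show (k * y) + (-1 - (m : ℤ) * s₀) * c = (k * y) + (c : ℤ) * (-1 - m * s₀)
        by ring] at h5
      rw [hsplit, hedef]
      exact h5
    have hgcd_nat : Nat.gcd c (b + j * m) = 1 := by
      have h2 : Int.gcd (c : ℤ) ((b + j * m : ℕ) : ℤ) = 1 := by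
        rw [show ((b + j * m : ℕ) : ℤ) = (b : ℤ) + j * m by push_cast; ring]
        exact Int.isCoprime_iff_gcd_eq_one.mp hcbj
      rw [Int.gcd_natCast_natCast] at h2
      exact h2
    have hadm : nAdm n c b := by
      refine ⟨Nat.pos_of_ne_zero hc0, hcdvd, ?_, j, hjlt, ?_⟩
      · rw [← hmdef]; exact hblt
      · rw [← hmdef]; exact hgcd_nat
    obtain ⟨k₀, hk₀lt, hk₀g, hdeq⟩ := dcb_spec hadm
    rw [← hmdef] at hk₀g hdeq
    have hDZ : ((dcb n c b : ℕ) : ℤ) = (c : ℤ) + b + k₀ * m := by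
      rw [hdeq]; push_cast; ring
    have hcD : IsCoprime (c : ℤ) ((dcb n c b : ℕ) : ℤ) := by
      rw [Int.isCoprime_iff_gcd_eq_one, Int.gcd_natCast_natCast, hdeq,
        Nat.add_assoc, Nat.add_comm c, Nat.gcd_add_self_right]
      exact hk₀g
    have hw : ((dcb n c b : ℕ) : ℤ) - e = m * ((k₀ : ℤ) - t) := by
      rw [hDZ, he]; ring
    obtain ⟨p, q, hpq⟩ := hce
    set t' : ℤ := q * ((k₀ : ℤ) - t) with ht'def
    set k' : ℤ := 1 + t' * m with hk'def
    have hk'e : k' * e - ((dcb n c b : ℕ) : ℤ)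
        = ((c : ℤ) * m) * (-(((k₀ : ℤ) - t) * p)) := by
      rw [hk'def, ht'def]
      linear_combination ((m : ℤ) * ((k₀ : ℤ) - t)) * hpq - hw
    have hk'm : IsCoprime k' (m : ℤ) := ⟨1, -t', by rw [hk'def]; ring⟩
    have hck' : IsCoprime (c : ℤ) k' := by
      have hdc : (c : ℤ) ∣ k' * e - ((dcb n c b : ℕ) : ℤ) :=
        ⟨(m : ℤ) * (-(((k₀ : ℤ) - t) * p)), by rw [hk'e]; ring⟩
      obtain ⟨s₁, hs₁⟩ := hdc
      have h6 : IsCoprime (c : ℤ) (k' * e) := by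
        have h5 := hcD.add_mul_right_right s₁
        rw [show ((dcb n c b : ℕ) : ℤ) + s₁ * c = k' * e by linear_combination -hs₁] at h5
        exact h5
      exact h6.of_mul_right_left
    have hk'n : IsCoprime k' (n : ℤ) := by
      rw [hnmZ]; exact (hck'.symm).mul_right hk'm
    have hkcoprime : IsCoprime (k' * k) (n : ℤ) :=
      hk'n.mul_left (Int.isCoprime_iff_gcd_eq_one.mpr hkn)
    refine ⟨c, b, hadm, ⟨k' * k, ?_, ?_, ?_⟩⟩
    · exact Int.isCoprime_iff_gcd_eq_one.mp hkcoprime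
    · show (n : ℤ) ∣ (k' * k) * x - (c : ℤ)
      obtain ⟨w₁, hw₁⟩ := hkx
      refine ⟨k' * w₁ + t', ?_⟩
      rw [hk'def]
      linear_combination (1 + t' * (m : ℤ)) * hw₁ + (-t') * hnmZ
    · show (n : ℤ) ∣ (k' * k) * y - ((dcb n c b : ℕ) : ℤ)
      refine ⟨-(((k₀ : ℤ) - t) * p), ?_⟩
      rw [hnmZ]
      linear_combination hk'e - k' * hedef
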